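/- arXiv:2401.07557 — 3 statements merged into one kernel-verified Lean document; each statement's English description precedes it below -/
import Mathlib

section
/- Let F be a finite field, σ : F → F a field automorphism with σ ∘ σ = id, ε ∈ {1, −1}, and β : V × V → F a nondegenerate form on a finite-dimensional F-vector space V that is F-linear in the first variable and satisfies β(v,u) = ε·σ(β(u,v)) for all u, v. Let X ∈ GL(V) satisfy β(Xu, Xv) = β(u,v) for all u, v, and let U be an X-invariant subspace of V with U ∩ U^⊥ = {0}, where U^⊥ = {v ∈ V : β(u,v) = 0 for all u ∈ U}. If f is the minimal polynomial of the restriction of X to U, then f = f*, where f*(t) = σ(f(0))⁻¹ · t^{deg f} · (σf)(1/t) and σf denotes f with σ applied to each coefficient. -/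
open Polynomial

/-- Noncommutative version of `Polynomial.eval₂_reflect_mul_pow` for `aeval`. -/
lemma aeval_reflect_mul_pow' {F A : Type*} [Field F] [Ring A] [Algebra F A]
    (x : A) [Invertible x] (N : ℕ) (f : Polynomial F) (hf : f.natDegree ≤ N) :
    (Polynomial.aeval (⅟ x) (Polynomial.reflect N f)) * x ^ N = Polynomial.aeval x f := by
  have key : ∀ k : ℕ, (⅟ x) ^ k * x ^ k = 1 := by
    intro k
    induction k with
    | zero => simp
    | succ k ih =>
      rw [pow_succ, pow_succ', mul_assoc, ← mul_assoc (⅟ x), invOf_mul_self, one_mul, ih]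
  refine Polynomial.induction_with_natDegree_le
    (fun f => (Polynomial.aeval (⅟ x) (Polynomial.reflect N f)) * x ^ N = Polynomial.aeval x f)
    N ?_ ?_ ?_ f hf
  · simp
  · intro n r _ hnN
    rw [Polynomial.reflect_C_mul_X_pow, Polynomial.revAt_le hnN]
    rw [map_mul, map_mul, Polynomial.aeval_C, Polynomial.aeval_C, map_pow, map_pow,
      Polynomial.aeval_X, Polynomial.aeval_X]
    have hN : x ^ N = x ^ (N - n) * x ^ n := by
      rw [← pow_add, Nat.sub_add_cancel hnN]
    rw [mul_assoc, hN, ← mul_assoc (⅟ x ^ (N - n)), key (N - n), one_mul]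
  · intro p q _ _ hp hq
    rw [Polynomial.reflect_add, map_add, add_mul, hp, hq, map_add]

/-- The `σ`-dual polynomial `f*(t) = σ(f(0))⁻¹ · t^(deg f) · (σf)(1/t)`, where `σf` applies
`σ` to each coefficient of `f`. -/
noncomputable def dualPolySigma {F : Type} [Field F] (σ : F →+* F) (f : Polynomial F) :
    Polynomial F :=
  Polynomial.C (σ (f.coeff 0))⁻¹ * (f.map σ).reverse

/-- If `X` is an isometry of a nondegenerate `(ε, σ)`-reflexive
sesquilinear form `β` and `U` is an `X`-invariant subspace with `U ∩ U^⊥ = 0`, then the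
minimal polynomial `f` of the restriction of `X` to `U` satisfies `f = f*`. -/
theorem minpoly_restrict_self_dual
    (F : Type) [Field F] [Fintype F] (σ : F →+* F) (hσ : ∀ a : F, σ (σ a) = a)
    (ε : F) (hε : ε = 1 ∨ ε = -1)
    (V : Type) [AddCommGroup V] [Module F V] [FiniteDimensional F V]
    (β : V → V → F)
    (hadd : ∀ u u' v : V, β (u + u') v = β u v + β u' v)
    (hsmul : ∀ (c : F) (u v : V), β (c • u) v = c * β u v)
    (hconj : ∀ u v : V, β v u = ε * σ (β u v))
    (hnd : ∀ u : V, (∀ v : V, β u v = 0) → u = 0)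
    (X : V →ₗ[F] V) (hX : Function.Bijective X)
    (hXβ : ∀ u v : V, β (X u) (X v) = β u v)
    (U : Submodule F V) (hXU : ∀ u ∈ U, X u ∈ U)
    (hUnd : ∀ w ∈ U, (∀ u ∈ U, β u w = 0) → w = 0) :
    minpoly F (X.restrict hXU) = dualPolySigma σ (minpoly F (X.restrict hXU)) := by
  set Y : Module.End F ↥U := X.restrict hXU with hYdef
  -- Y is bijective, hence a unit
  have hYinj : Function.Injective Y := by
    intro a b h
    have : X (a : V) = X (b : V) := by
      have := congrArg Subtype.val h
      simpa [hYdef, LinearMap.restrict_coe_apply] using this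
    exact Subtype.ext (hX.1 this)
  have hYbij : Function.Bijective Y :=
    ⟨hYinj, LinearMap.injective_iff_surjective.mp hYinj⟩
  have hYu : IsUnit Y := (Module.End.isUnit_iff Y).mpr hYbij
  set Z : Module.End F ↥U := ↑hYu.unit⁻¹ with hZdef
  have hZY : Z * Y = 1 := hYu.val_inv_mul
  have hYZ : Y * Z = 1 := hYu.mul_val_inv
  -- basic facts about f = minpoly
  have hint : IsIntegral F Y := LinearMap.isIntegral Y
  set f : Polynomial F := minpoly F Y with hfdef
  have hfm : f.Monic := minpoly.monic hint
  set d : ℕ := f.natDegree with hddef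
  -- f(0) ≠ 0
  have hf0 : f.coeff 0 ≠ 0 := by
    intro h0
    obtain ⟨g, hg⟩ := Polynomial.X_dvd_iff.mpr h0
    have hg0 : g ≠ 0 := by
      intro h
      exact minpoly.ne_zero hint (by rw [← hfdef, hg, h, mul_zero])
    have hgY : Polynomial.aeval Y g = 0 := by
      have h1 : Y * Polynomial.aeval Y g = 0 := by
        have h2 := minpoly.aeval F Y
        rw [← hfdef, hg, map_mul, Polynomial.aeval_X] at h2
        exact h2
      calc Polynomial.aeval Y g = (Z * Y) * Polynomial.aeval Y g := by rw [hZY, one_mul]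
        _ = Z * (Y * Polynomial.aeval Y g) := by rw [mul_assoc]
        _ = 0 := by rw [h1, mul_zero]
    have hle := minpoly.degree_le_of_ne_zero F Y hg0 hgY
    have hlt : g.degree < f.degree := by
      rw [hg, mul_comm]
      exact Polynomial.degree_lt_degree_mul_X hg0
    exact absurd hle (not_le.mpr hlt)
  -- second-slot (semi)linearity of β
  have hzero1 : ∀ v : V, β 0 v = 0 := by
    intro v
    simpa using hsmul 0 0 v
  have hzero2 : ∀ u : V, β u 0 = 0 := by
    intro u
    rw [hconj, hzero1, map_zero, mul_zero]
  have hadd2 : ∀ u w w' : V, β u (w + w') = β u w + β u w' := by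
    intro u w w'
    rw [hconj (w + w') u, hadd, map_add, mul_add, ← hconj, ← hconj]
  have hsmul2 : ∀ (c : F) (u w : V), β u (c • w) = σ c * β u w := by
    intro c u w
    rw [hconj (c • w) u, hsmul, map_mul, hconj w u]
    ring
  -- restricted isometry
  have hYβ : ∀ u v : ↥U, β ((Y u : ↥U) : V) ((Y v : ↥U) : V) = β (u : V) (v : V) := by
    intro u v
    rw [hYdef]
    rw [LinearMap.restrict_coe_apply, LinearMap.restrict_coe_apply]
    exact hXβ _ _
  -- the key adjoint relation
  have hZpair : ∀ (j : ℕ) (u v : ↥U), β (((Z ^ j) u : ↥U) : V) (v : V)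
      = β (u : V) (((Y ^ j) v : ↥U) : V) := by
    intro j
    induction j with
    | zero => simp
    | succ j ih =>
      intro u v
      have h1 : (Z ^ (j + 1)) u = (Z ^ j) (Z u) := by
        rw [pow_succ]; rfl
      have h2 : ∀ w v' : ↥U, β ((Z w : ↥U) : V) (v' : V) = β (w : V) ((Y v' : ↥U) : V) := by
        intro w v'
        have h3 := hYβ (Z w) v'
        have h4 : Y (Z w) = w := by
          have : (Y * Z) w = w := by rw [hYZ]; rfl
          simpa using this
        rw [h4] at h3
        exact h3.symm
      rw [h1, ih (Z u) v, h2 u ((Y ^ j) v)]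
      congr 2
      rw [pow_succ']
      rfl
  -- first-slot nondegeneracy on U
  have hnd1 : ∀ w : ↥U, (∀ v : ↥U, β (w : V) (v : V) = 0) → w = 0 := by
    intro w hw
    have hcoe : (w : V) = 0 := by
      apply hUnd (w : V) w.2
      intro u hu
      rw [hconj, hw ⟨u, hu⟩, map_zero, mul_zero]
    exact Subtype.ext hcoe
  -- linear functional in first slot
  let L : ↥U → (↥U →ₗ[F] F) := fun v =>
    { toFun := fun u => β (u : V) (v : V)
      map_add' := fun a b => hadd (a : V) (b : V) (v : V)
      map_smul' := fun c a => hsmul c (a : V) (v : V) }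
  -- additive hom in second slot
  let Rm : ↥U → (↥U →+ F) := fun u =>
    { toFun := fun w => β (u : V) (w : V)
      map_zero' := by simpa using hzero2 (u : V)
      map_add' := fun a b => hadd2 (u : V) (a : V) (b : V) }
  set q : Polynomial F := f.map σ with hqdef
  have hqd : q.natDegree = d := Polynomial.natDegree_map σ
  have hqlt : q.natDegree < d + 1 := by rw [hqd]; exact lt_add_one d
  have hflt : f.natDegree < d + 1 := lt_add_one d
  -- q(Z) = 0
  have hqZ : Polynomial.aeval Z q = 0 := by
    apply LinearMap.ext
    intro u
    rw [LinearMap.zero_apply]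
    apply hnd1
    intro v
    have e1 : (Polynomial.aeval Z q) u
        = ∑ j ∈ Finset.range (d + 1), σ (f.coeff j) • ((Z ^ j) u) := by
      rw [Polynomial.aeval_eq_sum_range' hqlt Z, LinearMap.sum_apply]
      exact Finset.sum_congr rfl fun j _ => by
        rw [LinearMap.smul_apply, hqdef, Polynomial.coeff_map]
    have e2 : (Polynomial.aeval Y f) v
        = ∑ j ∈ Finset.range (d + 1), f.coeff j • ((Y ^ j) v) := by
      rw [Polynomial.aeval_eq_sum_range' hflt Y, LinearMap.sum_apply]
      exact Finset.sum_congr rfl fun j _ => by rw [LinearMap.smul_apply]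
    calc β (((Polynomial.aeval Z q) u : ↥U) : V) (v : V)
        = (L v) (∑ j ∈ Finset.range (d + 1), σ (f.coeff j) • ((Z ^ j) u)) := by rw [e1]; rfl
      _ = ∑ j ∈ Finset.range (d + 1), σ (f.coeff j) * β (((Z ^ j) u : ↥U) : V) (v : V) := by
          rw [map_sum]
          exact Finset.sum_congr rfl fun j _ => by
            rw [map_smul]; rfl
      _ = ∑ j ∈ Finset.range (d + 1), σ (f.coeff j) * β (u : V) (((Y ^ j) v : ↥U) : V) :=
          Finset.sum_congr rfl fun j _ => by rw [hZpair]
      _ = ∑ j ∈ Finset.range (d + 1), β (u : V) ((f.coeff j • ((Y ^ j) v) : ↥U) : V) :=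
          Finset.sum_congr rfl fun j _ => by
            rw [Submodule.coe_smul, hsmul2]
      _ = (Rm u) (∑ j ∈ Finset.range (d + 1), f.coeff j • ((Y ^ j) v)) :=
          (map_sum (Rm u) _ _).symm
      _ = β (u : V) (((Polynomial.aeval Y f) v : ↥U) : V) := by rw [e2]; rfl
      _ = 0 := by
          rw [hfdef, minpoly.aeval, LinearMap.zero_apply]
          simpa using hzero2 (u : V)
  -- reverse(q)(Y) = 0
  letI : Invertible Z := ⟨Y, hYZ, hZY⟩
  have hrev' := aeval_reflect_mul_pow' Z q.natDegree q le_rfl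
  have hIZ : (⅟ Z : Module.End F ↥U) = Y := rfl
  rw [hIZ, hqZ] at hrev'
  -- hrev' : aeval Y (reflect q.natDegree q) * Z ^ q.natDegree = 0
  have hZYpow : Z ^ q.natDegree * Y ^ q.natDegree = 1 := by
    have hcomm : Commute Z Y := hZY.trans hYZ.symm
    rw [← hcomm.mul_pow, hZY, one_pow]
  have hrev0 : Polynomial.aeval Y q.reverse = 0 := by
    have : Polynomial.aeval Y (Polynomial.reflect q.natDegree q)
        * (Z ^ q.natDegree * Y ^ q.natDegree) = 0 := by
      rw [← mul_assoc, hrev', zero_mul]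
    rw [hZYpow, mul_one] at this
    exact this
  -- the dual polynomial annihilates Y
  have hdual0 : Polynomial.aeval Y (dualPolySigma σ f) = 0 := by
    unfold dualPolySigma
    rw [map_mul, Polynomial.aeval_C, ← hqdef, hrev0, mul_zero]
  have hdvd : f ∣ dualPolySigma σ f := minpoly.dvd F Y hdual0
  -- degree and leading coefficient of the dual
  have hσf0 : σ (f.coeff 0) ≠ 0 := by
    intro h
    exact hf0 (by rw [← hσ (f.coeff 0), h, map_zero])
  have hq00 : q.coeff 0 = σ (f.coeff 0) := by rw [hqdef, Polynomial.coeff_map]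
  have hqtd : q.natTrailingDegree = 0 :=
    Polynomial.natTrailingDegree_eq_zero.mpr (Or.inr (by rw [hq00]; exact hσf0))
  have hqrevdeg : q.reverse.natDegree = d := by
    rw [Polynomial.reverse_natDegree, hqtd, Nat.sub_zero, hqd]
  have hqrevlead : q.reverse.leadingCoeff = σ (f.coeff 0) := by
    rw [Polynomial.reverse_leadingCoeff, Polynomial.trailingCoeff, hqtd, hq00]
  have hdualdeg : (dualPolySigma σ f).natDegree = d := by
    unfold dualPolySigma
    rw [← hqdef, Polynomial.natDegree_C_mul (inv_ne_zero hσf0), hqrevdeg]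
  have hduallead : (dualPolySigma σ f).leadingCoeff = 1 := by
    unfold dualPolySigma
    rw [← hqdef, Polynomial.leadingCoeff_mul, Polynomial.leadingCoeff_C, hqrevlead,
      inv_mul_cancel₀ hσf0]
  exact Polynomial.eq_of_dvd_of_natDegree_le_of_leadingCoeff hdvd
    (by rw [hdualdeg]) (by rw [hfm.leadingCoeff, hduallead])
end

section
/- Let q be a prime power and f ∈ F_q[t] a monic irreducible polynomial with deg f > 1 and f = f*, where f*(t) = f(0)⁻¹ · t^{deg f} · f(1/t) is the dual polynomial. Then deg f is even. -/
/-- The dual polynomial `f*(t) = f(0)⁻¹ · t^(deg f) · f(1/t)`. -/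
noncomputable def dualPoly {F : Type} [Field F] (f : Polynomial F) : Polynomial F :=
  Polynomial.C (f.coeff 0)⁻¹ * f.reverse

open Polynomial in
lemma aux_no_root {F : Type} [Field F] {f : Polynomial F}
    (hirr : Irreducible f) (hdeg : 1 < f.natDegree) (a : F) : ¬ f.IsRoot a := by
  intro hroot
  obtain ⟨g, hg⟩ := (Polynomial.dvd_iff_isRoot).2 hroot
  rcases hirr.isUnit_or_isUnit hg with h | h
  · exact (Polynomial.not_isUnit_of_natDegree_pos _ (by simp)) h
  · have hX : (X - C a) ≠ 0 := X_sub_C_ne_zero a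
    have hgne : g ≠ 0 := by
      rintro rfl; rw [mul_zero] at hg
      exact (by positivity : (0:ℕ) < f.natDegree).ne' (by simp [hg])
    have := Polynomial.natDegree_mul hX hgne
    rw [← hg, Polynomial.natDegree_X_sub_C, Polynomial.natDegree_eq_zero_of_isUnit h] at this
    omega

/-- A self-dual monic irreducible polynomial of degree `> 1` over a finite
field has even degree. -/
theorem selfDual_irreducible_even_degree
    (q : ℕ) (hq : IsPrimePow q)
    (F : Type) [Field F] [Fintype F] (hF : Fintype.card F = q)
    (f : Polynomial F) (hmon : f.Monic) (hirr : Irreducible f)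
    (hdeg : 1 < f.natDegree) (hself : dualPoly f = f) :
    Even f.natDegree := by
  classical
  set d := f.natDegree with hd
  have hnoroot := aux_no_root hirr hdeg
  have h1 : Polynomial.eval 1 f ≠ 0 := hnoroot 1
  -- eval of reverse at 1 equals eval at 1
  have hrev1 : Polynomial.eval 1 f.reverse = Polynomial.eval 1 f := by
    haveI : Invertible (1 : F) := invertibleOne
    have := Polynomial.eval₂_reverse_mul_pow (RingHom.id F) (1 : F) f
    simpa [Polynomial.eval₂_eq_eval_map, invOf_one] using this
  -- coeff 0 = 1
  have hc0 : f.coeff 0 = 1 := by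
    have := congrArg (Polynomial.eval 1) hself
    rw [dualPoly, Polynomial.eval_mul, Polynomial.eval_C, hrev1] at this
    have hinv : (f.coeff 0)⁻¹ = 1 := by
      have h' : (f.coeff 0)⁻¹ * Polynomial.eval 1 f = 1 * Polynomial.eval 1 f := by
        rw [one_mul]; exact this
      exact mul_right_cancel₀ h1 h'
    have h0 : f.coeff 0 ≠ 0 := by
      intro h; rw [h] at hinv; simp at hinv
    rw [← inv_inv (f.coeff 0), hinv, inv_one]
  have hpal : f.reverse = f := by
    rw [dualPoly, hc0] at hself; simpa using hself
  -- coefficient symmetry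
  have hcoeff : ∀ i ≤ d, f.coeff i = f.coeff (d - i) := by
    intro i hi
    conv_lhs => rw [← hpal]
    rw [Polynomial.coeff_reverse, Polynomial.revAt_le hi]
  -- now suppose d odd, show -1 is a root
  rw [← Nat.not_odd_iff_even]
  intro hodd
  apply hnoroot (-1)
  have heval : Polynomial.eval (-1 : F) f =
      ∑ i ∈ Finset.range (d + 1), f.coeff i * (-1) ^ i := by
    rw [Polynomial.eval_eq_sum_range]
  rw [Polynomial.IsRoot, heval]
  apply Finset.sum_involution (fun i _ => d - i)
  · intro i hi
    simp only [Finset.mem_range] at hi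
    have hi' : i ≤ d := by omega
    have h1 : f.coeff (d - i) = f.coeff i := (hcoeff i hi').symm
    rw [h1]
    have hpow : (-1 : F) ^ i * ((-1 : F) ^ i + (-1 : F) ^ (d - i)) = 0 := by
      rw [mul_add, ← pow_add, ← pow_add]
      have : i + (d - i) = d := by omega
      rw [this, ← two_mul, pow_mul, neg_one_sq, one_pow, Odd.neg_one_pow hodd]
      ring
    have hpow' : (-1 : F) ^ i + (-1 : F) ^ (d - i) = 0 := by
      have hne : (-1 : F) ^ i ≠ 0 := by
        apply pow_ne_zero; exact neg_ne_zero.mpr one_ne_zero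
      exact (mul_eq_zero.mp hpow).resolve_left hne
    calc f.coeff i * (-1) ^ i + f.coeff i * (-1) ^ (d - i)
        = f.coeff i * ((-1) ^ i + (-1) ^ (d - i)) := by ring
      _ = 0 := by rw [hpow', mul_zero]
  · intro i hi hne
    simp only [Finset.mem_range] at hi
    obtain ⟨k, hk⟩ := hodd
    omega
  · intro i hi
    simp only [Finset.mem_range] at hi ⊢
    omega
  · intro i hi
    simp only [Finset.mem_range] at hi
    omega
end

section
/- Let q be an odd prime power, k ≥ 1, ε ∈ {1, −1} ⊆ F_q, and let V be an F_q-vector space of dimension 2k. Suppose X ∈ GL(V) acts cyclically on V (there exists v ∈ V such that the vectors v, vX, vX², … span V) with minimal polynomial (t − ε)^{2k}. Then there is no nondegenerate symmetric bilinear form β on V satisfying β(uX, vX) = β(u, v) for all u, v ∈ V. -/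
/-- For `q` odd, if `X` acts cyclically on a `2k`-dimensional space with
minimal polynomial `(t − ε)^{2k}` (`ε = ±1`), then `X` preserves no nondegenerate symmetric
bilinear form. -/
theorem no_invariant_symmetric_form_of_cyclic
    (q k : ℕ) (hq : IsPrimePow q) (hodd : Odd q) (hk : 1 ≤ k)
    (F : Type) [Field F] [Fintype F] (hF : Fintype.card F = q)
    (ε : F) (hε : ε = 1 ∨ ε = -1)
    (V : Type) [AddCommGroup V] [Module F V] [FiniteDimensional F V]
    (hdim : Module.finrank F V = 2 * k)
    (X : V →ₗ[F] V) (hX : Function.Bijective X)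
    (hcyc : ∃ v : V, Submodule.span F (Set.range fun m : ℕ => (X ^ m) v) = ⊤)
    (hmin : minpoly F X = (Polynomial.X - Polynomial.C ε) ^ (2 * k)) :
    ¬ ∃ β : V → V → F,
        (∀ u u' v : V, β (u + u') v = β u v + β u' v) ∧
        (∀ (c : F) (u v : V), β (c • u) v = c * β u v) ∧
        (∀ u v : V, β u v = β v u) ∧
        (∀ u : V, (∀ v : V, β u v = 0) → u = 0) ∧
        (∀ u v : V, β (X u) (X v) = β u v) := by
  rintro ⟨β, hadd, hsmul, hsymm, hnd, hinv⟩
  obtain ⟨v, hv⟩ := hcyc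
  have hε2 : ε * ε = 1 := by rcases hε with h | h <;> rw [h] <;> ring
  -- characteristic is odd
  have htwo : (2 : F) ≠ 0 := by
    intro h2
    have hchar : ringChar F = 2 :=
      CharP.ringChar_of_prime_eq_zero Nat.prime_two (by exact_mod_cast h2)
    have hcard := FiniteField.even_card_of_char_two hchar
    rw [hF] at hcard
    obtain ⟨m, hm⟩ := hodd
    omega
  -- bilinearity helpers
  have hβzero1 : ∀ z : V, β 0 z = 0 := fun z => by simpa using hsmul 0 0 z
  have hβsub1 : ∀ a b z : V, β (a - b) z = β a z - β b z := fun a b z => by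
    rw [sub_eq_add_neg, ← neg_one_smul F b, hadd, hsmul]; ring
  have hβadd2 : ∀ u a b : V, β u (a + b) = β u a + β u b := fun u a b => by
    rw [hsymm, hadd, hsymm a u, hsymm b u]
  have hβsub2 : ∀ u a b : V, β u (a - b) = β u a - β u b := fun u a b => by
    rw [hsymm, hβsub1, hsymm a u, hsymm b u]
  have hβsmul2 : ∀ (c : F) (u a : V), β u (c • a) = c * β u a := fun c u a => by
    rw [hsymm, hsmul, hsymm a u]
  -- the inverse of X
  set e := LinearEquiv.ofBijective X hX with he
  have hXe : ∀ z : V, X (e.symm z) = z := fun z => e.apply_symm_apply z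
  have hXe' : ∀ z : V, e.symm (X z) = z := fun z => e.symm_apply_apply z
  -- the nilpotent part
  set N : Module.End F V := X - algebraMap F (Module.End F V) ε with hNdef
  have hNapp : ∀ z : V, N z = X z - ε • z := fun z => by
    simp [hNdef, LinearMap.sub_apply, Module.algebraMap_end_apply]
  have hN2k : N ^ (2 * k) = 0 := by
    have h := minpoly.aeval F X
    rw [hmin] at h
    simpa [hNdef, map_pow, map_sub, Polynomial.aeval_X, Polynomial.aeval_C] using h
  have hNX : ∀ z : V, N (X z) = X (N z) := fun z => by
    simp [hNapp, map_sub, map_smul]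
  have hNpowX : ∀ (i : ℕ) (z : V), (N ^ i) (X z) = X ((N ^ i) z) := by
    intro i
    induction i with
    | zero => intro z; simp
    | succ i ih =>
      intro z
      rw [pow_succ', Module.End.mul_apply, Module.End.mul_apply, ih, hNX]
  have hNtop : ∀ z : V, N ((N ^ (2 * k - 1)) z) = 0 := fun z => by
    have h1 : 2 * k - 1 + 1 = 2 * k := by omega
    have h2 : (N ^ (2 * k - 1 + 1)) z = 0 := by
      rw [h1, hN2k]; rfl
    rwa [pow_succ', Module.End.mul_apply] at h2
  have hXtop : ∀ z : V, X ((N ^ (2 * k - 1)) z) = ε • (N ^ (2 * k - 1)) z := fun z => by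
    have h := hNtop z
    rw [hNapp] at h
    exact sub_eq_zero.mp h
  have hsymmtop : ∀ z : V, e.symm ((N ^ (2 * k - 1)) z) = ε • (N ^ (2 * k - 1)) z := by
    intro z
    have h1 := hXe' ((N ^ (2 * k - 1)) z)
    rw [hXtop, map_smul] at h1
    calc e.symm ((N ^ (2 * k - 1)) z)
        = (ε * ε) • e.symm ((N ^ (2 * k - 1)) z) := by rw [hε2, one_smul]
      _ = ε • (ε • e.symm ((N ^ (2 * k - 1)) z)) := by rw [mul_smul]
      _ = ε • (N ^ (2 * k - 1)) z := by rw [h1]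
  -- key identity
  have hkey : ∀ u z : V, β (N u) z = -(ε * β u (e.symm (N z))) := by
    intro u z
    have h1 : β (X u) z = β u (e.symm z) := by
      calc β (X u) z = β (X u) (X (e.symm z)) := by rw [hXe]
        _ = β u (e.symm z) := hinv _ _
    have h2 : e.symm (N z) = z - ε • e.symm z := by
      rw [hNapp, map_sub, map_smul, hXe']
    rw [hNapp, hβsub1, hsmul, h1, h2, hβsub2, hβsmul2]
    linear_combination (-(β u (e.symm z))) * hε2
  -- the adjoint operator
  set M : Module.End F V := e.symm.toLinearMap ∘ₗ N with hMdef
  have hMapp : ∀ z : V, M z = e.symm (N z) := fun z => rfl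
  have hiter : ∀ (i : ℕ) (u z : V), β ((N ^ i) u) z = (-ε) ^ i * β u ((M ^ i) z) := by
    intro i
    induction i with
    | zero => intro u z; simp
    | succ i ih =>
      intro u z
      have hM1 : e.symm (N ((M ^ i) z)) = (M ^ (i + 1)) z := by
        rw [pow_succ', Module.End.mul_apply, hMapp]
      rw [pow_succ N, Module.End.mul_apply, ih, hkey, hM1, pow_succ]
      ring
  -- commutation of e.symm with N
  have hsymmN : ∀ z : V, e.symm (N z) = N (e.symm z) := by
    intro z
    apply hX.injective
    rw [hXe, ← hNX, hXe]
  have hsymmNpow : ∀ (i : ℕ) (z : V), e.symm ((N ^ i) z) = (N ^ i) (e.symm z) := by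
    intro i
    induction i with
    | zero => intro z; simp
    | succ i ih =>
      intro z
      rw [pow_succ, Module.End.mul_apply, Module.End.mul_apply, ih, hsymmN]
  -- M ^ i in terms of iterates of e.symm and N ^ i
  have hMpow : ∀ (i : ℕ) (z : V), (M ^ i) z = (⇑e.symm)^[i] ((N ^ i) z) := by
    intro i
    induction i with
    | zero => intro z; simp
    | succ i ih =>
      intro z
      have h1 : (M ^ (i + 1)) z = (M ^ i) (M z) := by
        rw [pow_succ, Module.End.mul_apply]
      rw [h1, ih, hMapp, ← hsymmNpow, Function.iterate_succ_apply]
      congr 2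
  have hitertop : ∀ (i : ℕ) (z : V),
      (⇑e.symm)^[i] ((N ^ (2 * k - 1)) z) = ε ^ i • (N ^ (2 * k - 1)) z := by
    intro i
    induction i with
    | zero => intro z; simp
    | succ i ih =>
      intro z
      rw [Function.iterate_succ_apply', ih, map_smul, hsymmtop, smul_smul, ← pow_succ]
  -- main vanishing: β ((N^(2k-1)) v) v = 0
  have hβwv : β ((N ^ (2 * k - 1)) v) v = 0 := by
    have h1 := hiter (2 * k - 1) v v
    rw [hMpow, hitertop, hβsmul2, hsymm v ((N ^ (2 * k - 1)) v)] at h1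
    have h2 : (-ε) ^ (2 * k - 1) * ε ^ (2 * k - 1) = -1 := by
      rw [← mul_pow]
      have h3 : -ε * ε = -1 := by rw [neg_mul, hε2]
      rw [h3]
      exact Odd.neg_one_pow ⟨k - 1, by omega⟩
    have h5 : 2 * β ((N ^ (2 * k - 1)) v) v = 0 := by
      linear_combination h1 + β ((N ^ (2 * k - 1)) v) v * h2
    exact (mul_eq_zero.mp h5).resolve_left htwo
  -- extend to all powers of X
  have hβwX : ∀ m : ℕ, β ((N ^ (2 * k - 1)) v) ((X ^ m) v) = 0 := by
    intro m
    induction m with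
    | zero => simpa using hβwv
    | succ m ih =>
      have hx : (X ^ (m + 1)) v = X ((X ^ m) v) := by
        rw [pow_succ', Module.End.mul_apply]
      have h1 : β ((N ^ (2 * k - 1)) v) (X ((X ^ m) v))
          = β (e.symm ((N ^ (2 * k - 1)) v)) ((X ^ m) v) := by
        calc β ((N ^ (2 * k - 1)) v) (X ((X ^ m) v))
            = β (X (e.symm ((N ^ (2 * k - 1)) v))) (X ((X ^ m) v)) := by rw [hXe]
          _ = β (e.symm ((N ^ (2 * k - 1)) v)) ((X ^ m) v) := hinv _ _
      rw [hx, h1, hsymmtop, hsmul, ih, mul_zero]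
  -- β ((N^(2k-1)) v) vanishes identically
  have hβw : ∀ z : V, β ((N ^ (2 * k - 1)) v) z = 0 := by
    intro z
    have hz : z ∈ Submodule.span F (Set.range fun m : ℕ => (X ^ m) v) := by
      rw [hv]; trivial
    induction hz using Submodule.span_induction with
    | mem x hx => obtain ⟨m, rfl⟩ := hx; exact hβwX m
    | zero => rw [hsymm, hβzero1]
    | add a b _ _ ha hb =>
      rw [hsymm, hadd, hsymm a ((N ^ (2 * k - 1)) v), hsymm b ((N ^ (2 * k - 1)) v), ha, hb,
        add_zero]
    | smul c a _ ha =>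
      rw [hsymm, hsmul, hsymm a ((N ^ (2 * k - 1)) v), ha, mul_zero]
  have hw0 : (N ^ (2 * k - 1)) v = 0 := hnd _ hβw
  -- hence N^(2k-1) = 0
  have hNv : ∀ m : ℕ, (N ^ (2 * k - 1)) ((X ^ m) v) = 0 := by
    intro m
    induction m with
    | zero => simpa using hw0
    | succ m ih =>
      have hx : (X ^ (m + 1)) v = X ((X ^ m) v) := by
        rw [pow_succ', Module.End.mul_apply]
      rw [hx, hNpowX, ih, map_zero]
  have hNzero : (N ^ (2 * k - 1) : Module.End F V) = 0 := by
    rw [← LinearMap.ker_eq_top, eq_top_iff, ← hv, Submodule.span_le]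
    rintro x ⟨m, rfl⟩
    exact LinearMap.mem_ker.mpr (hNv m)
  -- contradiction with the minimal polynomial
  have hmono : ((Polynomial.X - Polynomial.C ε) ^ (2 * k - 1)).Monic :=
    (Polynomial.monic_X_sub_C ε).pow _
  have haev : Polynomial.aeval X ((Polynomial.X - Polynomial.C ε) ^ (2 * k - 1)) = 0 := by
    rw [map_pow, map_sub, Polynomial.aeval_X, Polynomial.aeval_C]
    exact hNzero
  have hle := minpoly.min F X hmono haev
  rw [hmin] at hle
  have h1 := Polynomial.natDegree_le_natDegree hle
  rw [Polynomial.natDegree_pow, Polynomial.natDegree_pow, Polynomial.natDegree_X_sub_C] at h1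
  omega
end
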